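/- Under the same hypotheses, the bottom value λ_k/‖εμ‖_∞ is not an eigenvalue of the self-adjoint operator A_k^{el} associated with the form a_k: if p ∈ W^1_2(ℝ) satisfies a_k[p] = (λ_k/‖εμ‖_∞)∫_ℝ |p|² μ dz, then p ≡ 0. -/

import Mathlib

open MeasureTheory

/-- Under the hypotheses of Statement 5, the bottom value
`λ_k/‖εμ‖_∞` is not an eigenvalue of `A_k^{el}`: if `p ∈ W¹₂(ℝ)` satisfies
`a_k[p] = (λ_k/‖εμ‖_∞) ∫ |p|² μ`, then `p ≡ 0`. -/
theorem bottom_not_eigenvalue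
    (ε μ : ℝ → ℝ) (ε₀ ε₁ μ₀ μ₁ K lk : ℝ)
    (hmε : Measurable ε) (hmμ : Measurable μ)
    (hε₀ : 0 < ε₀) (hμ₀ : 0 < μ₀)
    (hεb : ∀ z, ε₀ ≤ ε z ∧ ε z ≤ ε₁) (hμb : ∀ z, μ₀ ≤ μ z ∧ μ z ≤ μ₁)
    (hK : ∀ z, ε z * μ z ≤ K)
    (hlk : 0 < lk)
    (p p' : ℝ → ℂ)
    (hp : ∀ z, HasDerivAt p (p' z) z)
    (hp'L2 : Integrable (fun z => (ε z)⁻¹ * ‖p' z‖ ^ 2))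
    (hpL2 : Integrable (fun z => (ε z)⁻¹ * ‖p z‖ ^ 2))
    (hpμ : Integrable (fun z => μ z * ‖p z‖ ^ 2))
    (heq : ∫ z, (ε z)⁻¹ * (‖p' z‖ ^ 2 + lk * ‖p z‖ ^ 2)
      = (lk / K) * ∫ z, μ z * ‖p z‖ ^ 2) :
    ∀ z, p z = 0 := by
  have hεz : ∀ z, 0 < ε z := fun z => hε₀.trans_le (hεb z).1
  have hK0 : 0 < K :=
    lt_of_lt_of_le (mul_pos hε₀ hμ₀)
      (le_trans (mul_le_mul (hεb 0).1 (hμb 0).1 hμ₀.le (hεz 0).le) (hK 0))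
  -- split the integral
  have hsplit : (fun z => (ε z)⁻¹ * (‖p' z‖ ^ 2 + lk * ‖p z‖ ^ 2))
      = fun z => (ε z)⁻¹ * ‖p' z‖ ^ 2 + lk * ((ε z)⁻¹ * ‖p z‖ ^ 2) := by
    funext z; ring
  have hI : (∫ z, (ε z)⁻¹ * ‖p' z‖ ^ 2) + lk * ∫ z, (ε z)⁻¹ * ‖p z‖ ^ 2
      = (lk / K) * ∫ z, μ z * ‖p z‖ ^ 2 := by
    rw [← heq, hsplit, integral_add hp'L2 (hpL2.const_mul lk),
      integral_const_mul]
  -- pointwise comparison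
  have hptw : ∀ z, (lk / K) * (μ z * ‖p z‖ ^ 2) ≤ lk * ((ε z)⁻¹ * ‖p z‖ ^ 2) := by
    intro z
    have h1 : μ z ≤ K * (ε z)⁻¹ := by
      rw [← div_eq_mul_inv, le_div_iff₀ (hεz z)]
      calc μ z * ε z = ε z * μ z := mul_comm _ _
        _ ≤ K := hK z
    calc (lk / K) * (μ z * ‖p z‖ ^ 2)
        ≤ (lk / K) * (K * (ε z)⁻¹ * ‖p z‖ ^ 2) := by
          apply mul_le_mul_of_nonneg_left _ (by positivity)
          exact mul_le_mul_of_nonneg_right h1 (by positivity)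
      _ = (lk / K * K) * ((ε z)⁻¹ * ‖p z‖ ^ 2) := by ring
      _ = lk * ((ε z)⁻¹ * ‖p z‖ ^ 2) := by rw [div_mul_cancel₀ _ hK0.ne']
  have hIle : (lk / K) * ∫ z, μ z * ‖p z‖ ^ 2 ≤ lk * ∫ z, (ε z)⁻¹ * ‖p z‖ ^ 2 := by
    rw [← integral_const_mul, ← integral_const_mul]
    exact integral_mono (hpμ.const_mul _) (hpL2.const_mul lk) hptw
  have hI1nonneg : 0 ≤ ∫ z, (ε z)⁻¹ * ‖p' z‖ ^ 2 :=
    integral_nonneg fun z => by have := hεz z; positivity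
  have hI1 : ∫ z, (ε z)⁻¹ * ‖p' z‖ ^ 2 = 0 := le_antisymm (by linarith) hI1nonneg
  -- derivative vanishes a.e.
  have hae : p' =ᵐ[(volume : Measure ℝ)] 0 := by
    have h0 : (fun z => (ε z)⁻¹ * ‖p' z‖ ^ 2) =ᵐ[volume] 0 :=
      (integral_eq_zero_iff_of_nonneg (fun z => by have := hεz z; positivity) hp'L2).1 hI1
    filter_upwards [h0] with z hz
    have hεne : (ε z)⁻¹ ≠ 0 := inv_ne_zero (hεz z).ne'
    have : ‖p' z‖ ^ 2 = 0 := by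
      have := hz
      simp only [Pi.zero_apply] at this
      exact (mul_eq_zero.1 this).resolve_left hεne
    simpa [pow_eq_zero_iff, norm_eq_zero] using this
  -- p is constant
  have hconst : ∀ z, p z = p 0 := by
    intro z
    have hint : IntervalIntegrable p' volume 0 z := by
      rw [intervalIntegrable_iff]
      have h2 : p' =ᵐ[volume.restrict (Set.uIoc 0 z)] 0 := ae_restrict_of_ae hae
      exact (integrable_zero _ _ _).congr h2.symm
    have hftc : ∫ t in (0:ℝ)..z, p' t = p z - p 0 :=
      intervalIntegral.integral_eq_sub_of_hasDerivAt (fun x _ => hp x) hint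
    have hzero : ∫ t in (0:ℝ)..z, p' t = 0 := by
      rw [intervalIntegral.integral_congr_ae (g := fun _ => (0:ℂ))
        (hae.mono fun x hx _ => hx)]
      simp
    have := hftc.symm.trans hzero
    linear_combination this
  -- the constant must be 0
  have hp0 : p 0 = 0 := by
    by_contra h0
    have hc : 0 < ‖p 0‖ ^ 2 := pow_pos (norm_pos_iff.2 h0) 2
    have hε₁ : 0 < ε₁ := hε₀.trans_le (le_trans (hεb 0).1 (hεb 0).2)
    have hconst_int : Integrable (fun _ : ℝ => ε₁⁻¹ * ‖p 0‖ ^ 2) volume := by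
      apply hpL2.mono' aestronglyMeasurable_const
      filter_upwards with z
      rw [Real.norm_eq_abs, abs_of_nonneg (by positivity), hconst z]
      apply mul_le_mul_of_nonneg_right _ (by positivity)
      exact inv_anti₀ (hεz z) (hεb z).2
    rw [integrable_const_iff] at hconst_int
    rcases hconst_int with h | h
    · exact absurd h (by positivity)
    · have h := h.measure_univ_lt_top
      simp [Real.volume_univ] at h
  intro z
  rw [hconst z, hp0]
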